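/- Let X be an irreducible birth-and-death chain on ⟦b,a⟧ (b ≤ 0 < a) with invariant measure π, and set C := max( E[T_{a→0}] / E[T_{0→a}] , E[T_{b→0}] / E[T_{0→b}] ). If C ≤ 1, then ( (1 − 2C) / 2 ) · min( E[T_{0→a}] , E[T_{0→b}] ) ≤ E[T_{0→{a,b}}] ≤ min( E[T_{0→a}] , E[T_{0→b}] ), where T_{0→{a,b}} := min( T_{0→a}, T_{0→b} ). -/

import Mathlib

open MeasureTheory Filter Topology ENNReal ProbabilityTheory

noncomputable section

/-- First time `t ≥ 0` at which the path `ω` visits the set `A`,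
with value `⊤` if the path never visits `A`. -/
def hitTime {S : Type*} (A : Set S) (ω : ℕ → S) : ℝ≥0∞ :=
  ⨅ (t : ℕ) (_ : ω t ∈ A), (t : ℝ≥0∞)

/-- First time `t > 0` at which the path `ω` visits the set `A`. -/
def hitTimePos {S : Type*} (A : Set S) (ω : ℕ → S) : ℝ≥0∞ :=
  ⨅ (t : ℕ) (_ : 0 < t) (_ : ω t ∈ A), (t : ℝ≥0∞)

/-- First time `t ≥ r` at which the path `ω` visits the set `A`. -/
def hitTimeAfter {S : Type*} (A : Set S) (r : ℝ≥0∞) (ω : ℕ → S) : ℝ≥0∞ :=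
  ⨅ (t : ℕ) (_ : r ≤ (t : ℝ≥0∞)) (_ : ω t ∈ A), (t : ℝ≥0∞)

/-- One-step transition probabilities of a birth-and-death chain on `ℤ` with
birth rates `p` and death rates `q` (and holding probability `1 - p x - q x`). -/
def bdStep (p q : ℤ → ℝ) (x y : ℤ) : ℝ :=
  if y = x + 1 then p x else if y = x - 1 then q x
  else if y = x then 1 - p x - q x else 0

/-- An irreducible discrete-time birth-and-death chain on the integer interval
`⟦b,a⟧`, given by its transition probabilities `p x = p(x,x+1) > 0` (for `b ≤ x ≤ a-1`),
`q x = p(x,x-1) > 0` (for `b+1 ≤ x ≤ a`), and by the laws `law x` of the chain started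
at `x` on path space `ℕ → ℤ` (characterized by the cylinder/Markov property `markov`). -/
structure BDChain (b a : ℤ) where
  p : ℤ → ℝ
  q : ℤ → ℝ
  law : ℤ → Measure (ℕ → ℤ)
  prob : ∀ x, IsProbabilityMeasure (law x)
  p_pos : ∀ x, b ≤ x → x ≤ a - 1 → 0 < p x
  q_pos : ∀ x, b + 1 ≤ x → x ≤ a → 0 < q x
  p_zero : ∀ x, x < b ∨ a ≤ x → p x = 0
  q_zero : ∀ x, x ≤ b ∨ a < x → q x = 0
  r_nonneg : ∀ x, b ≤ x → x ≤ a → p x + q x ≤ 1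
  init : ∀ x, law x {ω | ω 0 = x} = 1
  markov : ∀ (x : ℤ) (u : ℕ → ℤ) (n : ℕ),
    law x {ω | ∀ i ≤ n + 1, ω i = u i}
      = law x {ω | ∀ i ≤ n, ω i = u i} * ENNReal.ofReal (bdStep p q (u n) (u (n + 1)))

/-- Mean hitting time `E[T_{x → y}]` for the birth-and-death chain `c`. -/
def BDChain.eT {b a : ℤ} (c : BDChain b a) (x y : ℤ) : ℝ≥0∞ :=
  ∫⁻ ω, hitTime {y} ω ∂(c.law x)

/-- Mean hitting time `E[T_{x → A}]` of a set `A` for the birth-and-death chain `c`. -/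
def BDChain.eTset {b a : ℤ} (c : BDChain b a) (x : ℤ) (A : Set ℤ) : ℝ≥0∞ :=
  ∫⁻ ω, hitTime A ω ∂(c.law x)

/-- Second moment `E[T_{x → y}²]` of the hitting time. -/
def BDChain.eT2 {b a : ℤ} (c : BDChain b a) (x y : ℤ) : ℝ≥0∞ :=
  ∫⁻ ω, (hitTime {y} ω) ^ 2 ∂(c.law x)

/-- `π` is the (unique) reversible invariant probability measure of the
birth-and-death chain `c` on `⟦b,a⟧`: it is positive on `⟦b,a⟧`, vanishes outside,
has total mass one, and satisfies the reversibility (detailed balance) relation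
`π(x) q_x = π(x-1) p_{x-1}`. -/
def BDChain.IsStationary {b a : ℤ} (c : BDChain b a) (π : ℤ → ℝ) : Prop :=
  (∀ x, b ≤ x → x ≤ a → 0 < π x) ∧ (∀ x, x < b ∨ a < x → π x = 0) ∧
  (∑ x ∈ Finset.Icc b a, π x) = 1 ∧
  (∀ x, b + 1 ≤ x → x ≤ a → π x * c.q x = π (x - 1) * c.p (x - 1))

namespace BDAux

variable {S : Type*}

lemma hitTime_le {A : Set S} {ω : ℕ → S} {t : ℕ} (h : ω t ∈ A) : hitTime A ω ≤ t :=
  iInf_le_of_le t (by simp [h])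

lemma hitTime_mono {A B : Set S} (h : A ⊆ B) (ω : ℕ → S) : hitTime B ω ≤ hitTime A ω :=
  le_iInf fun t => le_iInf fun ht => hitTime_le (h ht)

lemma le_hitTime {A : Set S} {ω : ℕ → S} {n : ℕ} (h : ∀ i < n, ω i ∉ A) :
    (n : ℝ≥0∞) ≤ hitTime A ω := by
  refine le_iInf fun t => le_iInf fun ht => ?_
  exact_mod_cast Nat.le_of_not_lt (fun hlt => h t hlt ht)

lemma hitTime_eq {A : Set S} {ω : ℕ → S} {n : ℕ} (h : ω n ∈ A) (h' : ∀ i < n, ω i ∉ A) :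
    hitTime A ω = n :=
  le_antisymm (hitTime_le h) (le_hitTime h')

lemma hitTime_eq_top {A : Set S} {ω : ℕ → S} (h : ∀ t, ω t ∉ A) : hitTime A ω = ⊤ := by
  simp only [hitTime]
  rw [iInf_eq_top]
  intro t; rw [iInf_eq_top]; intro ht; exact absurd ht (h t)

def shift (n : ℕ) (ω : ℕ → S) : ℕ → S := fun t => ω (n + t)

lemma hitTime_le_shift (A : Set S) (n : ℕ) (ω : ℕ → S) :
    hitTime A ω ≤ n + hitTime A (shift n ω) := by
  classical
  by_cases h : ∃ t, shift n ω t ∈ A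
  · have h1 : hitTime A (shift n ω) = Nat.find h := by
      refine hitTime_eq (Nat.find_spec h) fun i hi => Nat.find_min h hi
    rw [h1]
    have : ((n + Nat.find h : ℕ) : ℝ≥0∞) = (n : ℝ≥0∞) + (Nat.find h : ℝ≥0∞) := by
      push_cast; ring
    rw [← this]
    exact hitTime_le (Nat.find_spec h)
  · push_neg at h
    rw [hitTime_eq_top h]
    simp

lemma hitTime_dichotomy (A : Set S) (ω : ℕ → S) :
    (∀ t, ω t ∉ A) ∨ ∃ n, ω n ∈ A ∧ ∀ i < n, ω i ∉ A := by
  classical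
  by_cases h : ∃ t, ω t ∈ A
  · exact Or.inr ⟨Nat.find h, Nat.find_spec h, fun i hi => Nat.find_min h hi⟩
  · push_neg at h; exact Or.inl h

lemma one_le_hitTime {A : Set S} {ω : ℕ → S} (h : ω 0 ∉ A) : 1 ≤ hitTime A ω := by
  have := le_hitTime (A := A) (ω := ω) (n := 1) (by intro i hi; interval_cases i; exact h)
  simpa using this

-- measurability, for S = ℤ
lemma measurable_hitTime (A : Set ℤ) : Measurable (hitTime A) := by
  classical
  have : hitTime A = fun ω => ⨅ t : ℕ, (if ω t ∈ A then (t : ℝ≥0∞) else ⊤) := by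
    funext ω
    simp only [hitTime]
    congr 1; funext t
    by_cases h : ω t ∈ A <;> simp [h]
  rw [this]
  refine Measurable.iInf fun t => ?_
  refine Measurable.ite ?_ measurable_const measurable_const
  exact (measurable_pi_apply t) trivial

lemma measurable_shift (n : ℕ) : Measurable (shift (S := ℤ) n) := by
  refine measurable_pi_lambda _ fun t => measurable_pi_apply (n + t)

end BDAux
namespace BDAux

def cyl (u : ℕ → ℤ) (n : ℕ) : Set (ℕ → ℤ) := {ω | ∀ i ≤ n, ω i = u i}

lemma measurableSet_cyl (u : ℕ → ℤ) (n : ℕ) : MeasurableSet (cyl u n) := by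
  have : cyl u n = ⋂ (i : ℕ) (_ : i ≤ n), {ω : ℕ → ℤ | ω i = u i} := by
    ext ω; simp [cyl]
  rw [this]
  refine MeasurableSet.iInter fun i => MeasurableSet.iInter fun _ => ?_
  show MeasurableSet ((fun ω : ℕ → ℤ => ω i) ⁻¹' {u i})
  exact (measurable_pi_apply i) trivial

def cylSets : Set (Set (ℕ → ℤ)) := {s | ∃ u n, s = cyl u n}

lemma isPiSystem_cylSets : IsPiSystem cylSets := by
  rintro s ⟨u, n, rfl⟩ t ⟨v, m, rfl⟩ hne
  obtain ⟨ω, hω1, hω2⟩ := hne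
  rcases le_total n m with h | h
  · refine ⟨v, m, ?_⟩
    apply Set.eq_of_subset_of_subset
    · exact Set.inter_subset_right
    · intro ω' hω'
      refine ⟨fun i hi => ?_, hω'⟩
      rw [hω' i (hi.trans h), ← hω2 i (hi.trans h), hω1 i hi]
  · refine ⟨u, n, ?_⟩
    apply Set.eq_of_subset_of_subset
    · exact Set.inter_subset_left
    · intro ω' hω'
      refine ⟨hω', fun i hi => ?_⟩
      rw [hω' i (hi.trans h), ← hω1 i (hi.trans h), hω2 i hi]

/-- truncation -/
def trunc (n : ℕ) (ω : ℕ → ℤ) : ℕ → ℤ := fun j => if j ≤ n then ω j else 0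

def Trunc (n : ℕ) : Set (ℕ → ℤ) := {v | ∀ j, n < j → v j = 0}

lemma trunc_mem (n : ℕ) (ω : ℕ → ℤ) : trunc n ω ∈ Trunc n := by
  intro j hj; simp [trunc, Nat.not_le.mpr hj]

lemma trunc_agree (n : ℕ) (ω : ℕ → ℤ) : ∀ i ≤ n, ω i = trunc n ω i := by
  intro i hi; simp [trunc, hi]

lemma countable_truncSub (n : ℕ) (E : Set (ℕ → ℤ)) :
    Countable {v : ℕ → ℤ // v ∈ E ∧ v ∈ Trunc n} := by
  have hinj : Function.Injective
      (fun v : {v : ℕ → ℤ // v ∈ E ∧ v ∈ Trunc n} => (fun i : Fin (n+1) => v.1 i)) := by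
    rintro ⟨v, hv⟩ ⟨w, hw⟩ h
    ext1
    funext j
    show v j = w j
    rcases le_or_gt j n with hj | hj
    · have := congrFun h ⟨j, Nat.lt_succ_of_le hj⟩
      simpa using this
    · rw [hv.2 j hj, hw.2 j hj]
  exact Function.Injective.countable hinj

/-- determined by coordinates ≤ n -/
def DetBy (n : ℕ) (E : Set (ℕ → ℤ)) : Prop :=
  ∀ ω ω', (∀ i ≤ n, ω i = ω' i) → (ω ∈ E ↔ ω' ∈ E)

lemma DetBy.eq_iUnion {n : ℕ} {E : Set (ℕ → ℤ)} (h : DetBy n E) :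
    E = ⋃ v : {v : ℕ → ℤ // v ∈ E ∧ v ∈ Trunc n}, cyl v.1 n := by
  apply Set.eq_of_subset_of_subset
  · intro ω hω
    have hv : trunc n ω ∈ E := (h ω (trunc n ω) (trunc_agree n ω)).mp hω
    refine Set.mem_iUnion.mpr ⟨⟨trunc n ω, hv, trunc_mem n ω⟩, ?_⟩
    exact fun i hi => trunc_agree n ω i hi
  · intro ω hω
    obtain ⟨⟨v, hvE, _⟩, hcyl⟩ := Set.mem_iUnion.mp hω
    exact (h ω v hcyl).mpr hvE

lemma disjoint_cyl_of_trunc {n : ℕ} {E : Set (ℕ → ℤ)} :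
    Pairwise (Function.onFun Disjoint
      (fun v : {v : ℕ → ℤ // v ∈ E ∧ v ∈ Trunc n} => cyl v.1 n)) := by
  rintro ⟨v, hv⟩ ⟨w, hw⟩ hne
  rw [Function.onFun]
  rw [Set.disjoint_left]
  intro ω hωv hωw
  apply hne
  ext1
  funext j
  show v j = w j
  rcases le_or_gt j n with hj | hj
  · have h1 : ω j = v j := hωv j hj
    have h2 : ω j = w j := hωw j hj
    rw [← h1, ← h2]
  · rw [hv.2 j hj, hw.2 j hj]

lemma measurableSet_gen_coord (i : ℕ) (z : ℤ) :
    MeasurableSet[MeasurableSpace.generateFrom cylSets] {ω : ℕ → ℤ | ω i = z} := by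
  have hdet : DetBy i {ω : ℕ → ℤ | ω i = z} := by
    intro ω ω' hag
    simp only [Set.mem_setOf_eq, hag i le_rfl]
  rw [hdet.eq_iUnion]
  haveI := countable_truncSub i {ω : ℕ → ℤ | ω i = z}
  exact MeasurableSet.iUnion fun v =>
    MeasurableSpace.measurableSet_generateFrom ⟨v.1, i, rfl⟩

lemma generateFrom_cylSets :
    (inferInstance : MeasurableSpace (ℕ → ℤ)) = MeasurableSpace.generateFrom cylSets := by
  apply le_antisymm
  · show MeasurableSpace.pi ≤ _
    rw [MeasurableSpace.pi]
    refine iSup_le fun i => ?_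
    rw [MeasurableSpace.le_def]
    rintro s ⟨s', -, rfl⟩
    have hs : (fun ω : ℕ → ℤ => ω i) ⁻¹' s' = ⋃ z : s', {ω : ℕ → ℤ | ω i = z.1} := by
      ext ω; simp [eq_comm]
    rw [hs]
    haveI : Countable s' := Set.Countable.to_subtype (Set.to_countable s')
    exact MeasurableSet.iUnion fun z => measurableSet_gen_coord i z.1
  · refine MeasurableSpace.generateFrom_le ?_
    rintro s ⟨u, n, rfl⟩
    exact measurableSet_cyl u n

end BDAux
namespace BDAux
variable {b a : ℤ}

def ρ (X : BDChain b a) (z w : ℤ) : ℝ≥0∞ := ENNReal.ofReal (bdStep X.p X.q z w)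

lemma meas_coord (i : ℕ) (z : ℤ) : MeasurableSet {ω : ℕ → ℤ | ω i = z} := by
  show MeasurableSet ((fun ω : ℕ → ℤ => ω i) ⁻¹' {z})
  exact (measurable_pi_apply i) trivial

lemma law_eval0 (X : BDChain b a) (x z : ℤ) :
    X.law x {ω | ω 0 = z} = if z = x then 1 else 0 := by
  haveI := X.prob x
  by_cases h : z = x
  · subst h; simp [X.init]
  · have hsub : {ω : ℕ → ℤ | ω 0 = z} ⊆ {ω : ℕ → ℤ | ω 0 = x}ᶜ := by
      intro ω hω hω'
      exact h ((hω : ω 0 = z) ▸ (hω' : ω 0 = x))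
    have hc : X.law x ({ω : ℕ → ℤ | ω 0 = x}ᶜ) = 0 := by
      rw [measure_compl (meas_coord 0 x) (measure_ne_top _ _), X.init x, measure_univ]
      simp
    simp only [h, if_false]
    exact measure_mono_null hsub hc

lemma law_cyl (X : BDChain b a) (x : ℤ) (u : ℕ → ℤ) (n : ℕ) :
    X.law x (cyl u n)
      = (if u 0 = x then 1 else 0) * ∏ j ∈ Finset.range n, ρ X (u j) (u (j+1)) := by
  induction n with
  | zero =>
    have h0 : cyl u 0 = {ω : ℕ → ℤ | ω 0 = u 0} := by
      ext ω
      simp [cyl, Nat.le_zero]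
    rw [h0, law_eval0]
    simp
  | succ n ih =>
    have hm := X.markov x u n
    rw [show {ω : ℕ → ℤ | ∀ i ≤ n + 1, ω i = u i} = cyl u (n+1) from rfl,
        show {ω : ℕ → ℤ | ∀ i ≤ n, ω i = u i} = cyl u n from rfl] at hm
    rw [hm, ih, Finset.prod_range_succ, ρ]
    ring

def concat (u : ℕ → ℤ) (n : ℕ) (v : ℕ → ℤ) : ℕ → ℤ :=
  fun i => if i ≤ n then u i else v (i - n)

lemma cyl_inter_shift (u : ℕ → ℤ) (n : ℕ) (v : ℕ → ℤ) (m : ℕ) (h : v 0 = u n) :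
    cyl u n ∩ shift n ⁻¹' (cyl v m) = cyl (concat u n v) (n + m) := by
  ext ω
  simp only [cyl, Set.mem_inter_iff, Set.mem_preimage, Set.mem_setOf_eq, shift, concat]
  constructor
  · rintro ⟨h1, h2⟩ i hi
    by_cases hin : i ≤ n
    · simp only [hin, if_true]
      exact h1 i hin
    · push_neg at hin
      have hj : i - n ≤ m := by omega
      have hni : n + (i - n) = i := by omega
      rw [if_neg (Nat.not_le.mpr hin)]
      have h3 := h2 (i - n) hj
      rw [hni] at h3
      exact h3
  · intro hh
    constructor
    · intro i hi
      have := hh i (le_trans hi (Nat.le_add_right n m))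
      rw [if_pos hi] at this
      exact this
    · intro j hj
      rcases Nat.eq_zero_or_pos j with rfl | hjpos
      · have := hh n (Nat.le_add_right n m)
        rw [if_pos le_rfl] at this
        rw [h]
        exact this
      · have hle : n + j ≤ n + m := by omega
        have := hh (n + j) hle
        rw [if_neg (by omega), show n + j - n = j from by omega] at this
        exact this

lemma law_cyl_shift (X : BDChain b a) (x : ℤ) (u : ℕ → ℤ) (n : ℕ)
    {F : Set (ℕ → ℤ)} (hF : MeasurableSet F) :
    X.law x (cyl u n ∩ shift n ⁻¹' F) = X.law x (cyl u n) * X.law (u n) F := by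
  haveI := X.prob x
  haveI := X.prob (u n)
  set μ : Measure (ℕ → ℤ) := Measure.map (shift n) ((X.law x).restrict (cyl u n)) with hμdef
  have hmap : ∀ {G : Set (ℕ → ℤ)}, MeasurableSet G →
      μ G = X.law x (cyl u n ∩ shift n ⁻¹' G) := by
    intro G hG
    rw [hμdef, Measure.map_apply (measurable_shift n) hG,
        Measure.restrict_apply ((measurable_shift n) hG), Set.inter_comm]
  haveI : IsFiniteMeasure μ := by
    constructor
    rw [hmap MeasurableSet.univ]
    exact lt_of_le_of_lt (measure_mono (Set.inter_subset_left.trans (Set.subset_univ _)))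
      (measure_lt_top _ _)
  have hext : μ = (X.law x (cyl u n)) • X.law (u n) := by
    refine ext_of_generate_finite cylSets generateFrom_cylSets isPiSystem_cylSets ?_ ?_
    · rintro s ⟨v, m, rfl⟩
      rw [hmap (measurableSet_cyl v m), Measure.smul_apply, smul_eq_mul]
      by_cases hv : v 0 = u n
      · rw [cyl_inter_shift u n v m hv, law_cyl, law_cyl, law_cyl]
        have hc0 : concat u n v 0 = u 0 := by simp [concat]
        rw [Finset.prod_range_add, hc0]
        have e1 : ∀ j ∈ Finset.range n,
            ρ X (concat u n v j) (concat u n v (j+1)) = ρ X (u j) (u (j+1)) := by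
          intro j hj
          rw [Finset.mem_range] at hj
          have : concat u n v j = u j := by simp [concat, Nat.le_of_lt hj]
          have h2 : concat u n v (j+1) = u (j+1) := by simp [concat, Nat.succ_le_of_lt hj]
          rw [this, h2]
        have e2 : ∀ j ∈ Finset.range m,
            ρ X (concat u n v (n+j)) (concat u n v (n+j+1)) = ρ X (v j) (v (j+1)) := by
          intro j hj
          have hA : concat u n v (n+j) = v j := by
            rcases Nat.eq_zero_or_pos j with rfl | hp
            · simp [concat, hv]
            · simp only [concat]
              rw [if_neg (by omega), show n + j - n = j from by omega]
          have hB : concat u n v (n+j+1) = v (j+1) := by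
            simp only [concat]
            rw [if_neg (by omega), show n + j + 1 - n = j + 1 from by omega]
          rw [hA, hB]
        rw [Finset.prod_congr rfl e1, Finset.prod_congr rfl e2, if_pos hv]
        ring
      · have hempty : cyl u n ∩ shift n ⁻¹' (cyl v m) = ∅ := by
          rw [Set.eq_empty_iff_forall_notMem]
          rintro ω ⟨h1, h2⟩
          have hωn : ω n = u n := h1 n le_rfl
          have hωv : ω n = v 0 := by
            have := h2 0 (Nat.zero_le m)
            simpa [shift] using this
          exact hv (hωv ▸ hωn)
        rw [hempty, law_cyl X (u n) v m, if_neg hv]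
        simp
    · rw [hmap MeasurableSet.univ, Measure.smul_apply, smul_eq_mul, measure_univ]
      simp
  rw [← hmap hF, hext, Measure.smul_apply, smul_eq_mul]

lemma law_detBy_shift (X : BDChain b a) (x z : ℤ) (n : ℕ) {E F : Set (ℕ → ℤ)}
    (hdet : DetBy n E) (hz : ∀ ω ∈ E, ω n = z) (hF : MeasurableSet F) :
    X.law x (E ∩ shift n ⁻¹' F) = X.law x E * X.law z F := by
  haveI := countable_truncSub n E
  rw [hdet.eq_iUnion, Set.iUnion_inter]
  rw [measure_iUnion
      (fun v w hne => (disjoint_cyl_of_trunc hne).mono Set.inter_subset_left Set.inter_subset_left)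
      (fun v => (measurableSet_cyl _ _).inter ((measurable_shift n) hF)),
    measure_iUnion disjoint_cyl_of_trunc (fun v => measurableSet_cyl _ _),
    ← ENNReal.tsum_mul_right]
  refine tsum_congr fun v => ?_
  have hvz : v.1 n = z := hz v.1 v.2.1
  rw [law_cyl_shift X x v.1 n hF, hvz]

lemma setLIntegral_shift (X : BDChain b a) (x z : ℤ) (n : ℕ) {E : Set (ℕ → ℤ)}
    (hdet : DetBy n E) (hz : ∀ ω ∈ E, ω n = z) {f : (ℕ → ℤ) → ℝ≥0∞} (hf : Measurable f) :
    ∫⁻ ω in E, f (shift n ω) ∂X.law x = X.law x E * ∫⁻ ω, f ω ∂X.law z := by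
  have hμ : Measure.map (shift n) ((X.law x).restrict E) = (X.law x E) • X.law z := by
    refine Measure.ext fun G hG => ?_
    rw [Measure.map_apply (measurable_shift n) hG,
        Measure.restrict_apply ((measurable_shift n) hG), Set.inter_comm,
        law_detBy_shift X x z n hdet hz hG, Measure.smul_apply, smul_eq_mul]
  calc ∫⁻ ω in E, f (shift n ω) ∂X.law x
      = ∫⁻ ω, f ω ∂(Measure.map (shift n) ((X.law x).restrict E)) :=
        (lintegral_map hf (measurable_shift n)).symm
    _ = X.law x E * ∫⁻ ω, f ω ∂X.law z := by rw [hμ, lintegral_smul_measure, smul_eq_mul]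

end BDAux
namespace BDAux
variable {b a : ℤ}

def J (A : Set ℤ) (n : ℕ) (z : ℤ) : Set (ℕ → ℤ) :=
  {ω | ω n = z ∧ ω n ∈ A ∧ ∀ i < n, ω i ∉ A}

def NoHit (A : Set ℤ) : Set (ℕ → ℤ) := {ω | ∀ t, ω t ∉ A}

lemma meas_coord_mem (i : ℕ) (A : Set ℤ) : MeasurableSet {ω : ℕ → ℤ | ω i ∈ A} := by
  show MeasurableSet ((fun ω : ℕ → ℤ => ω i) ⁻¹' A)
  exact (measurable_pi_apply i) trivial

lemma measurableSet_J (A : Set ℤ) (n : ℕ) (z : ℤ) : MeasurableSet (J A n z) := by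
  have : J A n z = {ω : ℕ → ℤ | ω n = z} ∩ ({ω : ℕ → ℤ | ω n ∈ A} ∩
      ⋂ (i : ℕ) (_ : i < n), {ω : ℕ → ℤ | ω i ∈ A}ᶜ) := by
    ext ω
    simp only [J, Set.mem_inter_iff, Set.mem_setOf_eq, Set.mem_iInter, Set.mem_compl_iff]
  rw [this]
  exact (meas_coord n z).inter ((meas_coord_mem n A).inter
    (MeasurableSet.iInter fun i => MeasurableSet.iInter fun _ => (meas_coord_mem i A).compl))

lemma measurableSet_NoHit (A : Set ℤ) : MeasurableSet (NoHit A) := by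
  have : NoHit A = ⋂ (t : ℕ), {ω : ℕ → ℤ | ω t ∈ A}ᶜ := by
    ext ω; simp [NoHit]
  rw [this]
  exact MeasurableSet.iInter fun t => (meas_coord_mem t A).compl

lemma detBy_J (A : Set ℤ) (n : ℕ) (z : ℤ) : DetBy n (J A n z) := by
  intro ω ω' hag
  simp only [J, Set.mem_setOf_eq]
  rw [hag n le_rfl]
  constructor
  · rintro ⟨h1, h2, h3⟩
    exact ⟨h1, hag n le_rfl ▸ h2, fun i hi => hag i (le_of_lt hi) ▸ h3 i hi⟩
  · rintro ⟨h1, h2, h3⟩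
    refine ⟨h1, hag n le_rfl ▸ h2, fun i hi => hag i (le_of_lt hi) ▸ h3 i hi⟩

lemma disjoint_J (A : Set ℤ) :
    Pairwise (Function.onFun Disjoint (fun p : ℕ × ℤ => J A p.1 p.2)) := by
  rintro ⟨n, z⟩ ⟨m, w⟩ hne
  rw [Function.onFun, Set.disjoint_left]
  rintro ω ⟨h1, h2, h3⟩ ⟨g1, g2, g3⟩
  rcases lt_trichotomy n m with h | h | h
  · exact g3 n h h2
  · subst h
    refine absurd ?_ hne
    have hzw : z = w := by
      have e1 : ω n = z := h1
      have e2 : ω n = w := g1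
      rw [← e1, ← e2]
    rw [hzw]
  · exact h3 m h g2

lemma iUnion_J (A : Set ℤ) : (⋃ p : ℕ × ℤ, J A p.1 p.2) = (NoHit A)ᶜ := by
  ext ω
  simp only [Set.mem_iUnion, Set.mem_compl_iff, NoHit, Set.mem_setOf_eq, not_forall, not_not]
  constructor
  · rintro ⟨⟨n, z⟩, _, h2, _⟩
    exact ⟨n, h2⟩
  · rintro ⟨t, ht⟩
    rcases hitTime_dichotomy A ω with h | ⟨n, hn, hmin⟩
    · exact absurd ht (h t)
    · exact ⟨(n, ω n), rfl, hn, hmin⟩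

lemma lintegral_partition (ν : Measure (ℕ → ℤ)) (A : Set ℤ) (f : (ℕ → ℤ) → ℝ≥0∞) :
    ∫⁻ ω, f ω ∂ν
      = (∑' p : ℕ × ℤ, ∫⁻ ω in J A p.1 p.2, f ω ∂ν) + ∫⁻ ω in NoHit A, f ω ∂ν := by
  have hU : MeasurableSet (⋃ p : ℕ × ℤ, J A p.1 p.2) :=
    MeasurableSet.iUnion fun p => measurableSet_J A p.1 p.2
  have := lintegral_add_compl f hU (μ := ν)
  rw [← this, iUnion_J, compl_compl, ← iUnion_J]
  congr 1
  rw [Measure.restrict_iUnion (disjoint_J A) (fun p => measurableSet_J A p.1 p.2),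
      lintegral_sum_measure]

lemma hitTime_on_J {A : Set ℤ} {n : ℕ} {z : ℤ} {ω : ℕ → ℤ} (h : ω ∈ J A n z) :
    hitTime A ω = n := hitTime_eq h.2.1 h.2.2

lemma eTset_formula (X : BDChain b a) (x : ℤ) (A : Set ℤ) :
    X.eTset x A = (∑' p : ℕ × ℤ, (p.1 : ℝ≥0∞) * X.law x (J A p.1 p.2))
      + ⊤ * X.law x (NoHit A) := by
  rw [BDChain.eTset, lintegral_partition (X.law x) A]
  congr 1
  · refine tsum_congr fun p => ?_
    rw [setLIntegral_congr_fun (measurableSet_J A p.1 p.2)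
      ((fun ω hω => hitTime_on_J hω) :
        Set.EqOn (hitTime A) (fun _ => (p.1 : ℝ≥0∞)) (J A p.1 p.2))]
    rw [lintegral_const, Measure.restrict_apply_univ]
  · rw [setLIntegral_congr_fun (measurableSet_NoHit A)
      ((fun ω hω => hitTime_eq_top hω) :
        Set.EqOn (hitTime A) (fun _ => (⊤ : ℝ≥0∞)) (NoHit A))]
    rw [lintegral_const, Measure.restrict_apply_univ]

def exitP (X : BDChain b a) (x : ℤ) (A : Set ℤ) (z : ℤ) : ℝ≥0∞ :=
  ∑' n : ℕ, X.law x (J A n z)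

lemma exitP_tsum (X : BDChain b a) (x : ℤ) (A : Set ℤ) :
    ∑' z : ℤ, exitP X x A z = X.law x ((NoHit A)ᶜ) := by
  rw [← iUnion_J, measure_iUnion (disjoint_J A) (fun p => measurableSet_J A p.1 p.2)]
  rw [ENNReal.tsum_prod (f := fun n z => X.law x (J A n z)), ENNReal.tsum_comm]
  rfl

lemma exitP_sum_le_one (X : BDChain b a) (x : ℤ) (A : Set ℤ) :
    ∑' z : ℤ, exitP X x A z ≤ 1 := by
  haveI := X.prob x
  rw [exitP_tsum]
  exact prob_le_one

lemma exitP_sum_eq_one (X : BDChain b a) (x : ℤ) (A : Set ℤ)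
    (h : X.law x (NoHit A) = 0) : ∑' z : ℤ, exitP X x A z = 1 := by
  haveI := X.prob x
  rw [exitP_tsum, measure_compl (measurableSet_NoHit A) (measure_ne_top _ _), h,
      measure_univ]
  simp

lemma noHit_null_of_ne_top (X : BDChain b a) (x : ℤ) (A : Set ℤ)
    (h : X.eTset x A ≠ ⊤) : X.law x (NoHit A) = 0 := by
  by_contra hne
  apply h
  rw [eTset_formula]
  rw [ENNReal.top_mul hne]
  simp

lemma eT_le_exit (X : BDChain b a) (x y : ℤ) (A : Set ℤ)
    (hae : ∀ᵐ ω ∂X.law x, hitTime A ω ≤ hitTime {y} ω) :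
    X.eT x y ≤ X.eTset x A + ∑' z : ℤ, exitP X x A z * X.eT z y := by
  have key : ∀ p : ℕ × ℤ, ∫⁻ ω in J A p.1 p.2, hitTime {y} ω ∂X.law x
      ≤ (p.1 : ℝ≥0∞) * X.law x (J A p.1 p.2) + X.law x (J A p.1 p.2) * X.eT p.2 y := by
    rintro ⟨n, z⟩
    calc ∫⁻ ω in J A n z, hitTime {y} ω ∂X.law x
        ≤ ∫⁻ ω in J A n z, ((n : ℝ≥0∞) + hitTime {y} (shift n ω)) ∂X.law x :=
          lintegral_mono fun ω => hitTime_le_shift {y} n ω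
      _ = (n : ℝ≥0∞) * X.law x (J A n z)
            + ∫⁻ ω in J A n z, hitTime {y} (shift n ω) ∂X.law x := by
          rw [lintegral_add_left measurable_const, lintegral_const,
              Measure.restrict_apply_univ]
      _ = (n : ℝ≥0∞) * X.law x (J A n z) + X.law x (J A n z) * X.eT z y := by
          rw [setLIntegral_shift X x z n (detBy_J A n z) (fun ω hω => hω.1)
            (measurable_hitTime {y})]
          rfl
  -- a.e. bound on NoHit
  have hNoHit : ∫⁻ ω in NoHit A, hitTime {y} ω ∂X.law x
      = ∫⁻ ω in NoHit A, hitTime A ω ∂X.law x := by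
    refine lintegral_congr_ae ?_
    refine (ae_restrict_iff' (measurableSet_NoHit A)).mpr ?_
    filter_upwards [hae] with ω hω hmem
    have h1 : hitTime A ω = ⊤ := hitTime_eq_top hmem
    have h2 : hitTime {y} ω = ⊤ := eq_top_iff.mpr (h1 ▸ hω)
    rw [h1, h2]
  calc X.eT x y = (∑' p : ℕ × ℤ, ∫⁻ ω in J A p.1 p.2, hitTime {y} ω ∂X.law x)
        + ∫⁻ ω in NoHit A, hitTime {y} ω ∂X.law x :=
        lintegral_partition (X.law x) A _
    _ ≤ (∑' p : ℕ × ℤ, ((p.1 : ℝ≥0∞) * X.law x (J A p.1 p.2)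
          + X.law x (J A p.1 p.2) * X.eT p.2 y))
        + ∫⁻ ω in NoHit A, hitTime A ω ∂X.law x := by
        rw [hNoHit]
        exact add_le_add_left (ENNReal.tsum_le_tsum key) _
    _ = ((∑' p : ℕ × ℤ, (p.1 : ℝ≥0∞) * X.law x (J A p.1 p.2))
          + ⊤ * X.law x (NoHit A))
        + ∑' z : ℤ, exitP X x A z * X.eT z y := by
        rw [ENNReal.tsum_add]
        have hno : ∫⁻ ω in NoHit A, hitTime A ω ∂X.law x = ⊤ * X.law x (NoHit A) := by
          rw [setLIntegral_congr_fun (measurableSet_NoHit A)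
            ((fun ω hω => hitTime_eq_top hω) :
              Set.EqOn (hitTime A) (fun _ => (⊤ : ℝ≥0∞)) (NoHit A)),
            lintegral_const, Measure.restrict_apply_univ]
        have hsw : ∑' p : ℕ × ℤ, X.law x (J A p.1 p.2) * X.eT p.2 y
            = ∑' z : ℤ, exitP X x A z * X.eT z y := by
          rw [ENNReal.tsum_prod (f := fun n z => X.law x (J A n z) * X.eT z y),
            ENNReal.tsum_comm]
          refine tsum_congr fun z => ?_
          rw [exitP, ← ENNReal.tsum_mul_right]
        rw [hno, hsw]
        ring
    _ = X.eTset x A + ∑' z : ℤ, exitP X x A z * X.eT z y := by rw [eTset_formula]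

end BDAux
namespace BDAux
variable {b a : ℤ}

lemma ae_init (X : BDChain b a) (x : ℤ) : ∀ᵐ ω ∂X.law x, ω 0 = x := by
  haveI := X.prob x
  rw [Filter.eventually_iff, mem_ae_iff]
  have : {ω : ℕ → ℤ | ω 0 = x}ᶜ = {ω : ℕ → ℤ | ¬ ω 0 = x} := rfl
  rw [show ({ω : ℕ → ℤ | ω 0 = x} : Set (ℕ → ℤ)) = {ω | ω 0 = x} from rfl]
  rw [measure_compl (meas_coord 0 x) (measure_ne_top _ _), X.init x, measure_univ]
  simp

lemma null_two_coord (X : BDChain b a) (x : ℤ) (n : ℕ) (s t : ℤ)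
    (h : bdStep X.p X.q s t ≤ 0) :
    X.law x {ω : ℕ → ℤ | ω n = s ∧ ω (n+1) = t} = 0 := by
  set E := {ω : ℕ → ℤ | ω n = s ∧ ω (n+1) = t} with hE
  have hdet : DetBy (n+1) E := by
    intro ω ω' hag
    simp only [hE, Set.mem_setOf_eq, hag n (by omega), hag (n+1) le_rfl]
  haveI := countable_truncSub (n+1) E
  rw [hdet.eq_iUnion]
  refine measure_iUnion_null fun v => ?_
  have h1 := X.markov x v.1 n
  rw [show {ω : ℕ → ℤ | ∀ i ≤ n+1, ω i = v.1 i} = cyl v.1 (n+1) from rfl] at h1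
  have hs : v.1 n = s := v.2.1.1
  have ht : v.1 (n+1) = t := v.2.1.2
  rw [h1, hs, ht, ENNReal.ofReal_eq_zero.mpr h, mul_zero]

lemma ae_steps (X : BDChain b a) (x : ℤ) :
    ∀ᵐ ω ∂X.law x, ∀ n, 0 < bdStep X.p X.q (ω n) (ω (n+1)) := by
  rw [Filter.eventually_iff, mem_ae_iff]
  classical
  have hsub : {ω : ℕ → ℤ | ∀ n, 0 < bdStep X.p X.q (ω n) (ω (n+1))}ᶜ
      ⊆ ⋃ p : ℕ × ℤ × ℤ,
        (if bdStep X.p X.q p.2.1 p.2.2 ≤ 0 then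
          {ω : ℕ → ℤ | ω p.1 = p.2.1 ∧ ω (p.1+1) = p.2.2} else ∅) := by
    intro ω hω
    simp only [Set.mem_compl_iff, Set.mem_setOf_eq, not_forall, not_lt] at hω
    obtain ⟨n, hn⟩ := hω
    refine Set.mem_iUnion.mpr ⟨(n, ω n, ω (n+1)), ?_⟩
    rw [if_pos hn]
    exact ⟨rfl, rfl⟩
  refine measure_mono_null hsub (measure_iUnion_null fun p => ?_)
  by_cases hp : bdStep X.p X.q p.2.1 p.2.2 ≤ 0
  · rw [if_pos hp]
    exact null_two_coord X x p.1 p.2.1 p.2.2 hp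
  · rw [if_neg hp]
    exact measure_empty

lemma step_bounds {p q : ℤ → ℝ} {s t : ℤ} (h : 0 < bdStep p q s t) :
    t ≤ s + 1 ∧ s - 1 ≤ t := by
  by_cases h1 : t = s + 1
  · omega
  · by_cases h2 : t = s - 1
    · omega
    · by_cases h3 : t = s
      · omega
      · exfalso
        rw [bdStep, if_neg h1, if_neg h2, if_neg h3] at h
        exact lt_irrefl 0 h

lemma step_mem (X : BDChain b a) {s t : ℤ} (h : 0 < bdStep X.p X.q s t)
    (hs : s ∈ Set.Icc b a) : t ∈ Set.Icc b a := by
  obtain ⟨hb', ha'⟩ := hs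
  by_cases h1 : t = s + 1
  · rw [bdStep, if_pos h1] at h
    have := X.p_zero s
    constructor
    · omega
    · by_contra hc
      have : X.p s = 0 := X.p_zero s (by omega)
      rw [this] at h; exact lt_irrefl 0 h
  · by_cases h2 : t = s - 1
    · rw [bdStep, if_neg h1, if_pos h2] at h
      constructor
      · by_contra hc
        have : X.q s = 0 := X.q_zero s (by omega)
        rw [this] at h; exact lt_irrefl 0 h
      · omega
    · by_cases h3 : t = s
      · rw [h3]; exact ⟨hb', ha'⟩
      · exfalso
        rw [bdStep, if_neg h1, if_neg h2, if_neg h3] at h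
        exact lt_irrefl 0 h

lemma ae_stay (X : BDChain b a) (x : ℤ) (hx : x ∈ Set.Icc b a) :
    ∀ᵐ ω ∂X.law x, ∀ n, ω n ∈ Set.Icc b a := by
  filter_upwards [ae_init X x, ae_steps X x] with ω h0 hstep
  intro n
  induction n with
  | zero => rw [h0]; exact hx
  | succ n ih => exact step_mem X (hstep n) ih

lemma discrete_ivt {ω : ℕ → ℤ} (hstep : ∀ n, ω (n+1) ≤ ω n + 1 ∧ ω n - 1 ≤ ω (n+1))
    {t : ℕ} (h0 : ω 0 ≤ 0) (ht : 0 ≤ ω t) : ∃ s ≤ t, ω s = 0 := by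
  classical
  have hex : ∃ s, 0 ≤ ω s := ⟨t, ht⟩
  have hnt : Nat.find hex ≤ t := Nat.find_min' hex ht
  have hP : 0 ≤ ω (Nat.find hex) := Nat.find_spec hex
  rcases Nat.eq_zero_or_pos (Nat.find hex) with h | h
  · refine ⟨Nat.find hex, hnt, ?_⟩
    rw [h] at hP ⊢
    omega
  · obtain ⟨m, hm⟩ : ∃ m, Nat.find hex = m + 1 := ⟨Nat.find hex - 1, by omega⟩
    have hmneg : ¬ 0 ≤ ω m := Nat.find_min hex (by omega)
    have hstep1 := (hstep m).1
    refine ⟨Nat.find hex, hnt, ?_⟩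
    rw [hm] at hP ⊢
    omega

lemma discrete_ivt' {ω : ℕ → ℤ} (hstep : ∀ n, ω (n+1) ≤ ω n + 1 ∧ ω n - 1 ≤ ω (n+1))
    {t : ℕ} (h0 : 0 ≤ ω 0) (ht : ω t ≤ 0) : ∃ s ≤ t, ω s = 0 := by
  have hstep' : ∀ n, (-ω ·) (n+1) ≤ (-ω ·) n + 1 ∧ (-ω ·) n - 1 ≤ (-ω ·) (n+1) := by
    intro n
    have := hstep n
    constructor <;> simp <;> omega
  obtain ⟨s, hs, hs0⟩ := discrete_ivt hstep' (by simpa using h0) (by simpa using ht)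
  exact ⟨s, hs, by omega⟩

lemma ae_hitZero_le (X : BDChain b a) (x y : ℤ)
    (hxy : (x ≤ 0 ∧ 0 ≤ y) ∨ (0 ≤ x ∧ y ≤ 0)) :
    ∀ᵐ ω ∂X.law x, hitTime {(0:ℤ)} ω ≤ hitTime {y} ω := by
  filter_upwards [ae_init X x, ae_steps X x] with ω h0 hstep
  rcases hitTime_dichotomy {y} ω with h | ⟨n, hn, hmin⟩
  · rw [hitTime_eq_top h]; exact le_top
  · have hωn : ω n = y := hn
    have hT : hitTime {y} ω = n := hitTime_eq hn hmin
    have hsteps : ∀ m, ω (m+1) ≤ ω m + 1 ∧ ω m - 1 ≤ ω (m+1) :=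
      fun m => step_bounds (hstep m)
    obtain ⟨s, hs, hs0⟩ : ∃ s ≤ n, ω s = 0 := by
      rcases hxy with ⟨h1, h2⟩ | ⟨h1, h2⟩
      · exact discrete_ivt hsteps (by omega) (by omega)
      · exact discrete_ivt' hsteps (by omega) (by omega)
    rw [hT]
    calc hitTime {(0:ℤ)} ω ≤ (s : ℝ≥0∞) := hitTime_le (by simp [hs0])
      _ ≤ (n : ℝ≥0∞) := by exact_mod_cast hs

lemma eT_self (X : BDChain b a) (z : ℤ) : X.eT z z = 0 := by
  rw [BDChain.eT, lintegral_eq_zero_iff (measurable_hitTime _)]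
  filter_upwards [ae_init X z] with ω h0
  show hitTime {z} ω = 0
  have : hitTime {z} ω = ((0 : ℕ) : ℝ≥0∞) :=
    hitTime_eq (by simp [h0]) (fun i hi => absurd hi (Nat.not_lt_zero i))
  simpa using this

lemma one_le_eT (X : BDChain b a) (x y : ℤ) (hne : y ≠ x) : 1 ≤ X.eT x y := by
  haveI := X.prob x
  have hae : ∀ᵐ ω ∂X.law x, 1 ≤ hitTime {y} ω := by
    filter_upwards [ae_init X x] with ω h0
    refine one_le_hitTime ?_
    simp only [Set.mem_singleton_iff, h0]
    exact fun hc => hne hc.symm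
  calc (1 : ℝ≥0∞) = ∫⁻ _, 1 ∂X.law x := by rw [lintegral_one, measure_univ]
    _ ≤ ∫⁻ ω, hitTime {y} ω ∂X.law x := lintegral_mono_ae hae

end BDAux
namespace BDAux
variable {b a : ℤ}

lemma prod_subset_le {s t : Finset ℤ} (f : ℤ → ℝ≥0∞) (h : s ⊆ t)
    (h1 : ∀ i ∈ t, f i ≤ 1) : ∏ i ∈ t, f i ≤ ∏ i ∈ s, f i := by
  rw [← Finset.prod_sdiff h]
  exact mul_le_of_le_one_left (zero_le) (Finset.prod_le_one (fun _ _ => zero_le)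
    (fun i hi => h1 i (Finset.mem_sdiff.mp hi).1))

lemma prod_range_asc (f : ℤ → ℝ≥0∞) (z : ℤ) (m : ℕ) :
    ∏ j ∈ Finset.range m, f (z + j) = ∏ k ∈ Finset.Icc z (z + m - 1), f k := by
  refine Finset.prod_nbij' (fun j => z + j) (fun k => (k - z).toNat) ?_ ?_ ?_ ?_ ?_ <;>
    intro x hx <;> simp at hx ⊢ <;> try omega

lemma prod_range_desc (f : ℤ → ℝ≥0∞) (z : ℤ) (m : ℕ) :
    ∏ j ∈ Finset.range m, f (z - j) = ∏ k ∈ Finset.Icc (z - m + 1) z, f k := by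
  refine Finset.prod_nbij' (fun j => z - j) (fun k => (z - k).toNat) ?_ ?_ ?_ ?_ ?_ <;>
    intro x hx <;> simp at hx ⊢ <;> try omega

variable (X : BDChain b a)

def epsBD : ℝ≥0∞ :=
  (∏ j ∈ Finset.Icc b (a-1), ENNReal.ofReal (X.p j))
    * (∏ j ∈ Finset.Icc (b+1) a, ENNReal.ofReal (X.q j))

variable {X}

lemma q_nonneg' (hb : b ≤ 0) (ha : 0 < a) {j : ℤ} (hj : b ≤ j) (hj' : j ≤ a) :
    0 ≤ X.q j := by
  rcases eq_or_lt_of_le hj with h | h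
  · rw [X.q_zero j (Or.inl h.symm.le)]
  · exact (X.q_pos j (by omega) hj').le

lemma p_nonneg' (hb : b ≤ 0) (ha : 0 < a) {j : ℤ} (hj : b ≤ j) (hj' : j ≤ a) :
    0 ≤ X.p j := by
  rcases eq_or_lt_of_le hj' with h | h
  · rw [X.p_zero j (Or.inr h.ge)]
  · exact (X.p_pos j hj (by omega)).le

lemma p_le_one' (hb : b ≤ 0) (ha : 0 < a) {j : ℤ} (hj : b ≤ j) (hj' : j ≤ a) :
    X.p j ≤ 1 := by
  have h1 := X.r_nonneg j hj hj'
  have h2 := q_nonneg' (X := X) hb ha hj hj'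
  linarith

lemma q_le_one' (hb : b ≤ 0) (ha : 0 < a) {j : ℤ} (hj : b ≤ j) (hj' : j ≤ a) :
    X.q j ≤ 1 := by
  have h1 := X.r_nonneg j hj hj'
  have h2 := p_nonneg' (X := X) hb ha hj hj'
  linarith

lemma epsBD_pos (hb : b ≤ 0) (ha : 0 < a) : 0 < epsBD X := by
  rw [epsBD]
  apply ENNReal.mul_pos
  · refine (CanonicallyOrderedAdd.prod_pos.mpr fun j hj => ?_).ne'
    rw [Finset.mem_Icc] at hj
    exact ENNReal.ofReal_pos.mpr (X.p_pos j hj.1 hj.2)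
  · refine (CanonicallyOrderedAdd.prod_pos.mpr fun j hj => ?_).ne'
    rw [Finset.mem_Icc] at hj
    exact ENNReal.ofReal_pos.mpr (X.q_pos j hj.1 hj.2)

lemma prodP_le_one (hb : b ≤ 0) (ha : 0 < a) :
    ∀ i ∈ Finset.Icc b (a-1), ENNReal.ofReal (X.p i) ≤ 1 := by
  intro i hi
  rw [Finset.mem_Icc] at hi
  exact ENNReal.ofReal_le_one.mpr (p_le_one' hb ha hi.1 (by omega))

lemma prodQ_le_one (hb : b ≤ 0) (ha : 0 < a) :
    ∀ i ∈ Finset.Icc (b+1) a, ENNReal.ofReal (X.q i) ≤ 1 := by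
  intro i hi
  rw [Finset.mem_Icc] at hi
  exact ENNReal.ofReal_le_one.mpr (q_le_one' hb ha (by omega) hi.2)

/-- the `≤ N`-hitting event -/
def HitBy (y : ℤ) (N : ℕ) : Set (ℕ → ℤ) := {ω | ∃ t ≤ N, ω t = y}

lemma measurableSet_HitBy (y : ℤ) (N : ℕ) : MeasurableSet (HitBy y N) := by
  have : HitBy y N = ⋃ (t : ℕ) (_ : t ≤ N), {ω : ℕ → ℤ | ω t = y} := by
    ext ω; simp [HitBy]
  rw [this]
  exact MeasurableSet.iUnion fun t => MeasurableSet.iUnion fun _ => meas_coord t y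

lemma hit_prob (hb : b ≤ 0) (ha : 0 < a) {z y : ℤ}
    (hz : z ∈ Set.Icc b a) (hy : y ∈ Set.Icc b a) :
    epsBD X ≤ X.law z (HitBy y ((a - b).toNat)) := by
  obtain ⟨hzb, hza⟩ := hz
  obtain ⟨hyb, hya⟩ := hy
  rcases le_total z y with hzy | hzy
  · -- go up with p's
    have hcyl : cyl (fun i => min (z + i) y) ((y - z).toNat) ⊆ HitBy y ((a-b).toNat) := by
      intro ω hω
      refine ⟨(y - z).toNat, by omega, ?_⟩
      rw [hω ((y - z).toNat) le_rfl]
      show min (z + (((y - z).toNat : ℕ) : ℤ)) y = y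
      push_cast
      omega
    refine le_trans ?_ (measure_mono hcyl)
    rw [law_cyl]
    beta_reduce
    rw [if_pos (show min (z + ((0:ℕ):ℤ)) y = z by push_cast; omega), one_mul]
    have hρ : ∀ j ∈ Finset.range ((y - z).toNat),
        ρ X (min (z + (j:ℤ)) y) (min (z + ((j:ℕ)+1:ℕ)) y) = ENNReal.ofReal (X.p (z + j)) := by
      intro j hj
      rw [Finset.mem_range] at hj
      have h1 : min (z + (j:ℤ)) y = z + j := by omega
      have h2 : min (z + ((j:ℕ)+1:ℕ):ℤ) y = z + j + 1 := by push_cast; omega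
      rw [h1, h2, ρ, bdStep, if_pos rfl]
    rw [Finset.prod_congr rfl hρ, prod_range_asc (fun k => ENNReal.ofReal (X.p k)) z _]
    refine le_trans ?_ (prod_subset_le _ (Finset.Icc_subset_Icc (by omega) (by omega))
      (prodP_le_one hb ha))
    exact mul_le_of_le_one_right (zero_le)
      (Finset.prod_le_one (fun _ _ => zero_le) (prodQ_le_one hb ha))
  · -- go down with q's
    have hcyl : cyl (fun i => max (z - i) y) ((z - y).toNat) ⊆ HitBy y ((a-b).toNat) := by
      intro ω hω
      refine ⟨(z - y).toNat, by omega, ?_⟩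
      rw [hω ((z - y).toNat) le_rfl]
      show max (z - (((z - y).toNat : ℕ) : ℤ)) y = y
      push_cast
      omega
    refine le_trans ?_ (measure_mono hcyl)
    rw [law_cyl]
    beta_reduce
    rw [if_pos (show max (z - ((0:ℕ):ℤ)) y = z by push_cast; omega), one_mul]
    have hρ : ∀ j ∈ Finset.range ((z - y).toNat),
        ρ X (max (z - (j:ℤ)) y) (max (z - ((j:ℕ)+1:ℕ)) y) = ENNReal.ofReal (X.q (z - j)) := by
      intro j hj
      rw [Finset.mem_range] at hj
      have h1 : max (z - (j:ℤ)) y = z - j := by omega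
      have h2 : max (z - ((j:ℕ)+1:ℕ):ℤ) y = z - j - 1 := by push_cast; omega
      rw [h1, h2, ρ, bdStep, if_neg (by omega), if_pos rfl]
    rw [Finset.prod_congr rfl hρ, prod_range_desc (fun k => ENNReal.ofReal (X.q k)) z _]
    refine le_trans ?_ (prod_subset_le _ (Finset.Icc_subset_Icc (by omega) (by omega))
      (prodQ_le_one hb ha))
    exact mul_le_of_le_one_left (zero_le)
      (Finset.prod_le_one (fun _ _ => zero_le) (prodP_le_one hb ha))

/-- avoiding `y` up to time `m` -/
def Avoid (y : ℤ) (m : ℕ) : Set (ℕ → ℤ) := {ω | ∀ t ≤ m, ω t ≠ y}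

lemma measurableSet_Avoid (y : ℤ) (m : ℕ) : MeasurableSet (Avoid y m) := by
  have : Avoid y m = ⋂ (t : ℕ) (_ : t ≤ m), {ω : ℕ → ℤ | ω t = y}ᶜ := by
    ext ω; simp [Avoid]
  rw [this]
  exact MeasurableSet.iInter fun t => MeasurableSet.iInter fun _ => (meas_coord t y).compl

lemma compl_Avoid (y : ℤ) (m : ℕ) : (Avoid y m)ᶜ = HitBy y m := by
  ext ω; simp [Avoid, HitBy]

lemma detBy_Avoid_inter (y : ℤ) (m : ℕ) (z : ℤ) :
    DetBy m (Avoid y m ∩ {ω : ℕ → ℤ | ω m = z}) := by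
  intro ω ω' hag
  simp only [Set.mem_inter_iff, Avoid, Set.mem_setOf_eq]
  constructor
  · rintro ⟨h1, h2⟩
    exact ⟨fun t ht => hag t ht ▸ h1 t ht, hag m le_rfl ▸ h2⟩
  · rintro ⟨h1, h2⟩
    exact ⟨fun t ht => hag t ht ▸ h1 t ht, hag m le_rfl ▸ h2⟩

lemma tail_bound (hb : b ≤ 0) (ha : 0 < a) {x y : ℤ}
    (hx : x ∈ Set.Icc b a) (hy : y ∈ Set.Icc b a) (k : ℕ) :
    X.law x (Avoid y (k * (a - b).toNat)) ≤ (1 - epsBD X) ^ k := by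
  haveI := X.prob x
  set N := (a - b).toNat with hNdef
  induction k with
  | zero =>
    rw [pow_zero]
    exact prob_le_one
  | succ k ih =>
    have hcover : Avoid y ((k+1) * N)
        ⊆ ⋃ z : ℤ, ((Avoid y (k * N) ∩ {ω : ℕ → ℤ | ω (k*N) = z})
            ∩ shift (k*N) ⁻¹' (Avoid y N)) := by
      intro ω hω
      refine Set.mem_iUnion.mpr ⟨ω (k*N), ⟨⟨fun t ht => hω t (by nlinarith [Nat.le_refl 1]), rfl⟩, ?_⟩⟩
      intro t ht
      exact hω (k*N + t) (by nlinarith [Nat.le_refl 1])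
    refine le_trans (measure_mono hcover) ?_
    refine le_trans (measure_iUnion_le _) ?_
    have hterm : ∀ z : ℤ,
        X.law x ((Avoid y (k * N) ∩ {ω : ℕ → ℤ | ω (k*N) = z})
            ∩ shift (k*N) ⁻¹' (Avoid y N))
          ≤ X.law x (Avoid y (k * N) ∩ {ω : ℕ → ℤ | ω (k*N) = z}) * (1 - epsBD X) := by
      intro z
      rw [law_detBy_shift X x z (k*N) (detBy_Avoid_inter y (k*N) z)
        (fun ω hω => hω.2) (measurableSet_Avoid y N)]
      by_cases hzI : z ∈ Set.Icc b a
      · refine mul_le_mul_right ?_ _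
        have h1 : X.law z (Avoid y N) = 1 - X.law z (HitBy y N) := by
          haveI := X.prob z
          have h2 : Avoid y N = (HitBy y N)ᶜ := by rw [← compl_Avoid, compl_compl]
          rw [h2, prob_compl_eq_one_sub (measurableSet_HitBy y N)]
        rw [h1]
        exact tsub_le_tsub_left (hit_prob hb ha hzI hy) 1
      · have hz0 : X.law x (Avoid y (k * N) ∩ {ω : ℕ → ℤ | ω (k*N) = z}) = 0 := by
          refine measure_mono_null (fun ω hω => ?_) (ae_iff.mp (ae_stay X x hx))
          show ¬ ∀ n, ω n ∈ Set.Icc b a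
          intro hall
          exact hzI (hω.2 ▸ hall (k*N))
        rw [hz0, zero_mul]
        exact zero_le
    refine le_trans (ENNReal.tsum_le_tsum hterm) ?_
    rw [ENNReal.tsum_mul_right]
    have hsum : ∑' z : ℤ, X.law x (Avoid y (k * N) ∩ {ω : ℕ → ℤ | ω (k*N) = z})
        = X.law x (Avoid y (k * N)) := by
      rw [← measure_iUnion ?_ ?_]
      · congr 1
        ext ω
        simp only [Set.mem_iUnion, Set.mem_inter_iff, Set.mem_setOf_eq]
        constructor
        · rintro ⟨z, hz, _⟩; exact hz
        · intro hz; exact ⟨ω (k*N), hz, rfl⟩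
      · rintro z w hzw
        rw [Function.onFun, Set.disjoint_left]
        rintro ω ⟨-, h2⟩ ⟨-, g2⟩
        exact hzw ((h2 : ω (k*N) = z) ▸ (g2 : ω (k*N) = w))
      · exact fun z => (measurableSet_Avoid y (k*N)).inter (meas_coord (k*N) z)
    rw [hsum, pow_succ]
    exact mul_le_mul_left ih _

end BDAux
namespace BDAux
variable {b a : ℤ} {X : BDChain b a}

lemma noHit_null (hb : b ≤ 0) (ha : 0 < a) {x y : ℤ}
    (hx : x ∈ Set.Icc b a) (hy : y ∈ Set.Icc b a) :
    X.law x (NoHit {y}) = 0 := by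
  have hsub : ∀ k : ℕ, NoHit {y} ⊆ Avoid y (k * (a-b).toNat) := by
    intro k ω hω t _
    exact fun h => hω t (by simp [h])
  have hle : ∀ k : ℕ, X.law x (NoHit {y}) ≤ (1 - epsBD X)^k :=
    fun k => (measure_mono (hsub k)).trans (tail_bound hb ha hx hy k)
  have hr : (1 - epsBD X) < 1 :=
    ENNReal.sub_lt_self one_ne_top one_ne_zero (epsBD_pos hb ha).ne'
  have htend := ENNReal.tendsto_pow_atTop_nhds_zero_of_lt_one hr
  have : X.law x (NoHit {y}) ≤ 0 :=
    ge_of_tendsto htend (Filter.Eventually.of_forall hle)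
  exact le_antisymm this (zero_le)

lemma eT_ne_top (hb : b ≤ 0) (ha : 0 < a) {x y : ℤ}
    (hx : x ∈ Set.Icc b a) (hy : y ∈ Set.Icc b a) : X.eT x y ≠ ⊤ := by
  have hN1 : 0 < (a - b).toNat := by omega
  set N := (a - b).toNat with hNdef
  haveI : NeZero N := ⟨hN1.ne'⟩
  set r := 1 - epsBD X with hrdef
  have hr : r < 1 :=
    ENNReal.sub_lt_self one_ne_top one_ne_zero (epsBD_pos hb ha).ne'
  have heT : X.eT x y = X.eTset x {y} := rfl
  rw [heT, eTset_formula, noHit_null hb ha hx hy, mul_zero, add_zero]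
  set D : ℕ → Set (ℕ → ℤ) := fun n => ⋃ z : ℤ, J {y} n z with hDdef
  have hDmeas : ∀ n, MeasurableSet (D n) :=
    fun n => MeasurableSet.iUnion fun z => measurableSet_J {y} n z
  have hDdisj : Pairwise (Function.onFun Disjoint D) := by
    intro n m hnm
    rw [Function.onFun, Set.disjoint_left]
    rintro ω hωn hωm
    obtain ⟨z, hz⟩ := Set.mem_iUnion.mp hωn
    obtain ⟨w, gw⟩ := Set.mem_iUnion.mp hωm
    rcases lt_trichotomy n m with h | h | h
    · exact gw.2.2 n h hz.2.1
    · exact hnm h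
    · exact hz.2.2 m h gw.2.1
  have step0 : ∑' p : ℕ × ℤ, (p.1 : ℝ≥0∞) * X.law x (J {y} p.1 p.2)
      = ∑' n : ℕ, (n : ℝ≥0∞) * X.law x (D n) := by
    rw [ENNReal.tsum_prod (f := fun (n : ℕ) (z : ℤ) => (n : ℝ≥0∞) * X.law x (J {y} n z))]
    refine tsum_congr fun n => ?_
    rw [ENNReal.tsum_mul_left, hDdef]
    congr 1
    rw [measure_iUnion ?_ (fun z => measurableSet_J {y} n z)]
    rintro z w hzw
    rw [Function.onFun, Set.disjoint_left]
    rintro ω ⟨h1, -⟩ ⟨g1, -⟩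
    exact hzw ((h1 : ω n = z) ▸ (g1 : ω n = w))
  have step2 : ∀ n : ℕ, (n : ℝ≥0∞) * X.law x (D n)
      = ∑' j : ℕ, if j < n then X.law x (D n) else 0 := by
    intro n
    rw [tsum_eq_sum (s := Finset.range n) (fun j hj => if_neg (by simpa using hj))]
    rw [Finset.sum_congr rfl (fun j hj => if_pos (Finset.mem_range.mp hj))]
    rw [Finset.sum_const, Finset.card_range, nsmul_eq_mul]
  have step3 : ∀ j : ℕ, (∑' n : ℕ, if j < n then X.law x (D n) else 0)
      ≤ X.law x (Avoid y j) := by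
    intro j
    have hval : ∀ n : ℕ, (if j < n then X.law x (D n) else 0)
        = X.law x (if j < n then D n else ∅) := by
      intro n; split_ifs <;> simp
    calc (∑' n : ℕ, if j < n then X.law x (D n) else 0)
        = X.law x (⋃ n, if j < n then D n else ∅) := by
          rw [measure_iUnion ?_ ?_]
          · exact tsum_congr hval
          · intro n m hnm
            refine (hDdisj hnm).mono ?_ ?_
            · show (if j < n then D n else ∅) ≤ D n
              split_ifs
              · exact le_rfl
              · exact bot_le
            · show (if j < m then D m else ∅) ≤ D m
              split_ifs
              · exact le_rfl
              · exact bot_le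
          · intro n; split_ifs
            · exact hDmeas n
            · exact MeasurableSet.empty
      _ ≤ X.law x (Avoid y j) := by
          refine measure_mono ?_
          refine Set.iUnion_subset fun n => ?_
          split_ifs with h
          · rintro ω hω t ht
            obtain ⟨z, -, -, hz3⟩ := Set.mem_iUnion.mp hω
            exact fun hc => hz3 t (by omega) (by simp [hc])
          · exact Set.empty_subset _
  have step4 : ∀ j : ℕ, X.law x (Avoid y j) ≤ r ^ (j / N) := by
    intro j
    refine le_trans (measure_mono ?_) (tail_bound hb ha hx hy (j / N))
    intro ω hω t ht
    exact hω t (le_trans ht (Nat.div_mul_le_self j N))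
  have step5 : (∑' j : ℕ, r ^ (j / N)) = (N : ℝ≥0∞) * (1 - r)⁻¹ := by
    rw [← Equiv.tsum_eq (Nat.divModEquiv N).symm (fun j => r ^ (j / N))]
    have hval : ∀ p : ℕ × Fin N,
        r ^ (((Nat.divModEquiv N).symm p : ℕ) / N) = r ^ p.1 := by
      rintro ⟨k, i⟩
      have : ((Nat.divModEquiv N).symm (k, i) : ℕ) = k * N + i := rfl
      rw [this, Nat.add_comm, Nat.add_mul_div_right _ _ hN1,
        Nat.div_eq_of_lt i.2, Nat.zero_add]
    rw [tsum_congr hval]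
    rw [ENNReal.tsum_prod (f := fun k (_ : Fin N) => r ^ k)]
    have : ∀ k : ℕ, (∑' _ : Fin N, r ^ k) = (N : ℝ≥0∞) * r ^ k := by
      intro k
      rw [tsum_fintype]
      simp [Finset.sum_const, nsmul_eq_mul]
    rw [tsum_congr this, ENNReal.tsum_mul_left, ENNReal.tsum_geometric]
  have hfin : (N : ℝ≥0∞) * (1 - r)⁻¹ ≠ ⊤ := by
    refine ENNReal.mul_ne_top (ENNReal.natCast_ne_top N) ?_
    rw [Ne, ENNReal.inv_eq_top, tsub_eq_zero_iff_le]
    exact not_le.mpr hr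
  refine ne_top_of_le_ne_top hfin ?_
  rw [step0]
  calc ∑' n : ℕ, (n : ℝ≥0∞) * X.law x (D n)
      = ∑' n : ℕ, ∑' j : ℕ, if j < n then X.law x (D n) else 0 := tsum_congr step2
    _ = ∑' j : ℕ, ∑' n : ℕ, if j < n then X.law x (D n) else 0 := ENNReal.tsum_comm
    _ ≤ ∑' j : ℕ, X.law x (Avoid y j) := ENNReal.tsum_le_tsum step3
    _ ≤ ∑' j : ℕ, r ^ (j / N) := ENNReal.tsum_le_tsum step4
    _ = (N : ℝ≥0∞) * (1 - r)⁻¹ := step5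

end BDAux
namespace BDAux
variable {b a : ℤ} {X : BDChain b a}

lemma exitP_eq_zero (x : ℤ) {A : Set ℤ} {z : ℤ} (hz : z ∉ A) : exitP X x A z = 0 := by
  rw [exitP]
  have : ∀ n : ℕ, J A n z = ∅ := by
    intro n
    rw [Set.eq_empty_iff_forall_notMem]
    rintro ω ⟨h1, h2, -⟩
    exact hz (h1 ▸ h2)
  simp [this]

lemma eT_eq_eTset (x y : ℤ) : X.eT x y = X.eTset x {y} := rfl

theorem main_bounds (hb : b ≤ 0) (ha : 0 < a) (X : BDChain b a)
    (hC : X.eT a 0 / X.eT 0 a ⊔ X.eT b 0 / X.eT 0 b ≤ 1) :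
    (1 - 2 * (X.eT a 0 / X.eT 0 a ⊔ X.eT b 0 / X.eT 0 b)) / 2
        * (X.eT 0 a ⊓ X.eT 0 b) ≤ X.eTset 0 {a, b}
      ∧ X.eTset 0 {a, b} ≤ X.eT 0 a ⊓ X.eT 0 b := by
  have hsub_a : ({a} : Set ℤ) ⊆ {a, b} := by
    intro z hz
    rw [Set.mem_singleton_iff] at hz
    exact Set.mem_insert_iff.mpr (Or.inl hz)
  have hsub_b : ({b} : Set ℤ) ⊆ {a, b} := by
    intro z hz
    rw [Set.mem_singleton_iff] at hz
    exact Set.mem_insert_iff.mpr (Or.inr (by simp [hz]))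
  -- upper bound always
  have hupper : X.eTset 0 {a, b} ≤ X.eT 0 a ⊓ X.eT 0 b := by
    refine le_inf ?_ ?_
    · exact lintegral_mono fun ω => hitTime_mono hsub_a ω
    · exact lintegral_mono fun ω => hitTime_mono hsub_b ω
  refine ⟨?_, hupper⟩
  set C := X.eT a 0 / X.eT 0 a ⊔ X.eT b 0 / X.eT 0 b with hCdef
  by_cases hM : X.eTset 0 {a, b} = ⊤
  · rw [hM]; exact le_top
  by_cases hbz : b = 0
  · subst hbz
    rw [eT_self X 0]
    rw [inf_eq_right.mpr (zero_le)]
    simp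
  have hblt : b < 0 := lt_of_le_of_ne hb hbz
  by_cases hC2 : 1 ≤ 2 * C
  · rw [tsub_eq_zero_iff_le.mpr hC2, ENNReal.zero_div, zero_mul]
    exact zero_le
  push_neg at hC2
  -- basic quantities & finiteness
  have h0I : (0 : ℤ) ∈ Set.Icc b a := ⟨hb, ha.le⟩
  have haI : a ∈ Set.Icc b a := ⟨hb.trans ha.le, le_rfl⟩
  have hbI : b ∈ Set.Icc b a := ⟨le_rfl, hb.trans ha.le⟩
  have hAfin : X.eT 0 a ≠ ⊤ := eT_ne_top hb ha h0I haI
  have hBfin : X.eT 0 b ≠ ⊤ := eT_ne_top hb ha h0I hbI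
  have hA'fin : X.eT a 0 ≠ ⊤ := eT_ne_top hb ha haI h0I
  have hB'fin : X.eT b 0 ≠ ⊤ := eT_ne_top hb ha hbI h0I
  have hA1 : 1 ≤ X.eT 0 a := one_le_eT X 0 a ha.ne'
  have hB1 : 1 ≤ X.eT 0 b := one_le_eT X 0 b hbz
  have hA0 : X.eT 0 a ≠ 0 := (lt_of_lt_of_le zero_lt_one hA1).ne'
  have hB0 : X.eT 0 b ≠ 0 := (lt_of_lt_of_le zero_lt_one hB1).ne'
  have hCfin : C ≠ ⊤ := by
    refine ne_top_of_le_ne_top one_ne_top (le_trans ?_ hC2.le)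
    rw [two_mul]
    exact le_add_self
  have hab_ne : a ≠ b := by omega
  -- Markov inequalities
  set Pa := exitP X 0 {a, b} a with hPa
  set Pb := exitP X 0 {a, b} b with hPb
  have hsupp1 : ∀ z ∉ ({a, b} : Finset ℤ), exitP X 0 {a, b} z * X.eT z a = 0 := by
    intro z hz
    rw [exitP_eq_zero 0 (by simpa using hz), zero_mul]
  have hsupp2 : ∀ z ∉ ({a, b} : Finset ℤ), exitP X 0 {a, b} z * X.eT z b = 0 := by
    intro z hz
    rw [exitP_eq_zero 0 (by simpa using hz), zero_mul]
  have hI1 : X.eT 0 a ≤ X.eTset 0 {a, b} + Pb * X.eT b a := by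
    have h := eT_le_exit X 0 a {a, b}
      (Filter.Eventually.of_forall fun ω => hitTime_mono hsub_a ω)
    rwa [tsum_eq_sum hsupp1, Finset.sum_pair hab_ne, eT_self, mul_zero, zero_add] at h
  have hI2 : X.eT 0 b ≤ X.eTset 0 {a, b} + Pa * X.eT a b := by
    have h := eT_le_exit X 0 b {a, b}
      (Filter.Eventually.of_forall fun ω => hitTime_mono hsub_b ω)
    rwa [tsum_eq_sum hsupp2, Finset.sum_pair hab_ne, eT_self, mul_zero, add_zero] at h
  -- crossing bounds
  have hEba : X.eT b a ≤ X.eT b 0 + X.eT 0 a := by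
    have h := eT_le_exit X b a {0} (ae_hitZero_le X b a (Or.inl ⟨hb, ha.le⟩))
    have hsupp : ∀ z ∉ ({0} : Finset ℤ), exitP X b {0} z * X.eT z a = 0 := by
      intro z hz
      rw [exitP_eq_zero b (by simpa using hz), zero_mul]
    rw [tsum_eq_sum hsupp, Finset.sum_singleton] at h
    refine h.trans (add_le_add_right ?_ _)
    calc exitP X b {0} 0 * X.eT 0 a ≤ 1 * X.eT 0 a := by
          refine mul_le_mul_left ?_ _
          exact le_trans (ENNReal.le_tsum 0) (exitP_sum_le_one X b {0})
      _ = X.eT 0 a := one_mul _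
  have hEab : X.eT a b ≤ X.eT a 0 + X.eT 0 b := by
    have h := eT_le_exit X a b {0} (ae_hitZero_le X a b (Or.inr ⟨ha.le, hb⟩))
    have hsupp : ∀ z ∉ ({0} : Finset ℤ), exitP X a {0} z * X.eT z b = 0 := by
      intro z hz
      rw [exitP_eq_zero a (by simpa using hz), zero_mul]
    rw [tsum_eq_sum hsupp, Finset.sum_singleton] at h
    refine h.trans (add_le_add_right ?_ _)
    calc exitP X a {0} 0 * X.eT 0 b ≤ 1 * X.eT 0 b := by
          refine mul_le_mul_left ?_ _
          exact le_trans (ENNReal.le_tsum 0) (exitP_sum_le_one X a {0})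
      _ = X.eT 0 b := one_mul _
  have hI1c : X.eT 0 a ≤ X.eTset 0 {a, b} + Pb * (X.eT b 0 + X.eT 0 a) :=
    hI1.trans (add_le_add_right (mul_le_mul_right hEba Pb) _)
  have hI2c : X.eT 0 b ≤ X.eTset 0 {a, b} + Pa * (X.eT a 0 + X.eT 0 b) :=
    hI2.trans (add_le_add_right (mul_le_mul_right hEab Pa) _)
  -- exit probabilities sum to one
  have hPsum : Pa + Pb = 1 := by
    have h := exitP_sum_eq_one X 0 {a, b} (noHit_null_of_ne_top X 0 {a, b} hM)
    have hsupp : ∀ z ∉ ({a, b} : Finset ℤ), exitP X 0 {a, b} z = 0 := by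
      intro z hz
      exact exitP_eq_zero 0 (by simpa using hz)
    rwa [tsum_eq_sum hsupp, Finset.sum_pair hab_ne] at h
  have hPa1 : Pa ≤ 1 := by rw [← hPsum]; exact self_le_add_right _ _
  have hPb1 : Pb ≤ 1 := by rw [← hPsum]; exact self_le_add_left _ _
  have hPafin : Pa ≠ ⊤ := ne_top_of_le_ne_top one_ne_top hPa1
  have hPbfin : Pb ≠ ⊤ := ne_top_of_le_ne_top one_ne_top hPb1
  -- division hypotheses
  have hA' : X.eT a 0 ≤ C * X.eT 0 a :=
    (ENNReal.div_le_iff_le_mul (Or.inl hA0) (Or.inl hAfin)).mp le_sup_left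
  have hB' : X.eT b 0 ≤ C * X.eT 0 b :=
    (ENNReal.div_le_iff_le_mul (Or.inl hB0) (Or.inl hBfin)).mp le_sup_right
  -- pass to real numbers
  set α := (X.eT 0 a).toReal with hα
  set β := (X.eT 0 b).toReal with hβ
  set α' := (X.eT a 0).toReal with hα'
  set β' := (X.eT b 0).toReal with hβ'
  set μ := (X.eTset 0 {a, b}).toReal with hμ
  set pa := Pa.toReal with hpa
  set pb := Pb.toReal with hpb
  set c := C.toReal with hc
  have hBAfin : X.eT b 0 + X.eT 0 a ≠ ⊤ := ENNReal.add_ne_top.mpr ⟨hB'fin, hAfin⟩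
  have hABfin : X.eT a 0 + X.eT 0 b ≠ ⊤ := ENNReal.add_ne_top.mpr ⟨hA'fin, hBfin⟩
  have hm1fin : Pb * (X.eT b 0 + X.eT 0 a) ≠ ⊤ := ENNReal.mul_ne_top hPbfin hBAfin
  have hm2fin : Pa * (X.eT a 0 + X.eT 0 b) ≠ ⊤ := ENNReal.mul_ne_top hPafin hABfin
  have rI1 : α ≤ μ + pb * (β' + α) := by
    have h := (ENNReal.toReal_le_toReal hAfin (ENNReal.add_ne_top.mpr ⟨hM, hm1fin⟩)).mpr hI1c
    rwa [ENNReal.toReal_add hM hm1fin, ENNReal.toReal_mul,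
      ENNReal.toReal_add hB'fin hAfin] at h
  have rI2 : β ≤ μ + pa * (α' + β) := by
    have h := (ENNReal.toReal_le_toReal hBfin (ENNReal.add_ne_top.mpr ⟨hM, hm2fin⟩)).mpr hI2c
    rwa [ENNReal.toReal_add hM hm2fin, ENNReal.toReal_mul,
      ENNReal.toReal_add hA'fin hBfin] at h
  have rA' : α' ≤ c * α := by
    have h := (ENNReal.toReal_le_toReal hA'fin (ENNReal.mul_ne_top hCfin hAfin)).mpr hA'
    rwa [ENNReal.toReal_mul] at h
  have rB' : β' ≤ c * β := by
    have h := (ENNReal.toReal_le_toReal hB'fin (ENNReal.mul_ne_top hCfin hBfin)).mpr hB'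
    rwa [ENNReal.toReal_mul] at h
  have rPsum : pa + pb = 1 := by
    have h := congrArg ENNReal.toReal hPsum
    rwa [ENNReal.toReal_add hPafin hPbfin, ENNReal.toReal_one] at h
  have rc2 : 2 * c < 1 := by
    have h := (ENNReal.toReal_lt_toReal (ENNReal.mul_ne_top (by simp) hCfin) one_ne_top).mpr hC2
    rwa [ENNReal.toReal_mul, ENNReal.toReal_ofNat, ENNReal.toReal_one] at h
  have rα1 : 1 ≤ α := by
    have h := (ENNReal.toReal_le_toReal one_ne_top hAfin).mpr hA1
    rwa [ENNReal.toReal_one] at h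
  have rβ1 : 1 ≤ β := by
    have h := (ENNReal.toReal_le_toReal one_ne_top hBfin).mpr hB1
    rwa [ENNReal.toReal_one] at h
  have hpa0 : 0 ≤ pa := ENNReal.toReal_nonneg
  have hpb0 : 0 ≤ pb := ENNReal.toReal_nonneg
  have hc0 : 0 ≤ c := ENNReal.toReal_nonneg
  have hμ0 : 0 ≤ μ := ENNReal.toReal_nonneg
  -- reduce the goal to real arithmetic
  have h2Cfin : (1 : ℝ≥0∞) - 2 * C ≠ ⊤ := ne_top_of_le_ne_top one_ne_top tsub_le_self
  have hLfin : (1 - 2 * C) / 2 * (X.eT 0 a ⊓ X.eT 0 b) ≠ ⊤ := by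
    refine ENNReal.mul_ne_top ?_ (ne_top_of_le_ne_top hAfin inf_le_left)
    rw [ENNReal.div_eq_inv_mul]
    exact ENNReal.mul_ne_top (ENNReal.inv_ne_top.mpr two_ne_zero) h2Cfin
  refine (ENNReal.toReal_le_toReal hLfin hM).mp ?_
  have hgoal_eq : ((1 - 2 * C) / 2 * (X.eT 0 a ⊓ X.eT 0 b)).toReal
      = (1 - 2 * c) / 2 * (min α β) := by
    rw [ENNReal.toReal_mul, ENNReal.toReal_div,
      ENNReal.toReal_sub_of_le hC2.le one_ne_top, ENNReal.toReal_mul,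
      ENNReal.toReal_min hAfin hBfin]
    norm_num
    rfl
  rw [hgoal_eq]
  -- real arithmetic
  have e0a : pa * α + pb * α = α := by rw [← add_mul, rPsum, one_mul]
  have e0b : pa * β + pb * β = β := by rw [← add_mul, rPsum, one_mul]
  have e1 : pb * β' ≤ pb * (c * β) := mul_le_mul_of_nonneg_left rB' hpb0
  have e2 : pa * α' ≤ pa * (c * α) := mul_le_mul_of_nonneg_left rA' hpa0
  have e3 : pb * (β' + α) = pb * β' + pb * α := mul_add _ _ _
  have e4 : pa * (α' + β) = pa * α' + pa * β := mul_add _ _ _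
  have f1 : pa * α ≤ μ + pb * (c * β) := by linarith
  have f2 : pb * β ≤ μ + pa * (c * α) := by linarith
  have hminle : min α β ≤ pa * α + pb * β := by
    have h1 : pa * min α β ≤ pa * α := mul_le_mul_of_nonneg_left (min_le_left _ _) hpa0
    have h2 : pb * min α β ≤ pb * β := mul_le_mul_of_nonneg_left (min_le_right _ _) hpb0
    have h3 : pa * min α β + pb * min α β = min α β := by rw [← add_mul, rPsum, one_mul]
    linarith
  have key : (1 - c) * (pa * α + pb * β) ≤ 2 * μ := by
    have expand : (1 - c) * (pa * α + pb * β)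
        = pa * α + pb * β - c * (pa * α) - c * (pb * β) := by ring
    have g1 : pb * (c * β) = c * (pb * β) := by ring
    have g2 : pa * (c * α) = c * (pa * α) := by ring
    linarith
  have hmin0 : 0 ≤ min α β := le_min (by linarith) (by linarith)
  have t1 : (1 - 2*c) * min α β ≤ (1 - c) * min α β :=
    mul_le_mul_of_nonneg_right (by linarith) hmin0
  have t2 : (1 - c) * min α β ≤ (1 - c) * (pa * α + pb * β) :=
    mul_le_mul_of_nonneg_left hminle (by linarith)
  linarith

end BDAux

/-- For an irreducible birth-and-death chain on `⟦b,a⟧`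
(`b ≤ 0 < a`) with invariant measure `π`, set
`C = max(E[T_{a→0}]/E[T_{0→a}], E[T_{b→0}]/E[T_{0→b}])`. If `C ≤ 1` then
`((1-2C)/2) · min(E[T_{0→a}], E[T_{0→b}]) ≤ E[T_{0→{a,b}}] ≤ min(E[T_{0→a}], E[T_{0→b}])`. -/
theorem exit_time_two_walls_bounds {b a : ℤ} (hb : b ≤ 0) (ha : 0 < a)
    (X : BDChain b a) (π : ℤ → ℝ) (hπ : X.IsStationary π)
    (hC : X.eT a 0 / X.eT 0 a ⊔ X.eT b 0 / X.eT 0 b ≤ 1) :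
    (1 - 2 * (X.eT a 0 / X.eT 0 a ⊔ X.eT b 0 / X.eT 0 b)) / 2
        * (X.eT 0 a ⊓ X.eT 0 b) ≤ X.eTset 0 {a, b}
      ∧ X.eTset 0 {a, b} ≤ X.eT 0 a ⊓ X.eT 0 b := by
  exact BDAux.main_bounds hb ha X hC
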